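/- arXiv:1910.00181 — 3 statements merged into one kernel-verified Lean document; each statement's English description precedes it below -/
import Mathlib

section
/- Let n ≥ 2 and let r be an odd positive integer with 1 < r < 2n and gcd(r, 2n) = 1. Write 2n + 1 = k*r + n' with 0 ≤ n' < r. Then the equality n'^2 - (if k is even then n' else r - n') = r*(n' - 1) holds if and only if r divides 2n+1 or r divides n+1. Moreover, in either of these two cases k is necessarily odd. -/
/-- Arithmetic core of the rigidity classification in type B_n. -/
theorem stmt_7 (n r k n' : ℤ) (hn : 2 ≤ n) (hodd : Odd r) (hr : 1 < r)
    (hlt : r < 2 * n) (hcop : IsCoprime r (2 * n))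
    (hdiv : 2 * n + 1 = k * r + n') (h0 : 0 ≤ n') (h1 : n' < r) :
    ((n' ^ 2 - (if Even k then n' else r - n') = r * (n' - 1)) ↔
      (r ∣ 2 * n + 1 ∨ r ∣ n + 1)) ∧
    ((r ∣ 2 * n + 1 ∨ r ∣ n + 1) → Odd k) := by
  -- key fact A : r ∣ 2n+1 → n' = 0
  have hA : r ∣ 2 * n + 1 → n' = 0 := by
    intro h
    have hdn : r ∣ n' := by
      have : n' = (2 * n + 1) - k * r := by linarith
      rw [this]
      exact dvd_sub h (Dvd.intro_left k rfl)
    by_contra hne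
    have hpos : 0 < n' := lt_of_le_of_ne h0 (Ne.symm hne)
    have := Int.le_of_dvd hpos hdn
    omega
  -- key fact B : r ∣ n+1 → n' = r - 1
  have hB : r ∣ n + 1 → n' = r - 1 := by
    intro h
    have hdn : r ∣ n' + 1 := by
      have : n' + 1 = 2 * (n + 1) - k * r := by linarith
      rw [this]
      exact dvd_sub (Dvd.dvd.mul_left h 2) (Dvd.intro_left k rfl)
    have := Int.le_of_dvd (by omega) hdn
    omega
  -- second conjunct
  have hC : (r ∣ 2 * n + 1 ∨ r ∣ n + 1) → Odd k := by
    rintro (h | h)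
    · have hn0 := hA h
      have hkr : Odd (k * r) := by
        have : k * r = 2 * n + 1 := by omega
        rw [this]; exact ⟨n, by ring⟩
      exact (Int.odd_mul.mp hkr).1
    · have hn0 := hB h
      obtain ⟨m, hm⟩ := h
      have hk1 : (k + 1) * r = 2 * m * r := by
        have : (k + 1) * r = 2 * (n + 1) := by linarith
        rw [this, hm]; ring
      have : k + 1 = 2 * m := by
        have hr0 : r ≠ 0 := by omega
        exact mul_right_cancel₀ hr0 hk1
      exact ⟨m - 1, by omega⟩
  refine ⟨⟨?_, ?_⟩, hC⟩
  · intro heq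
    by_cases hk : Even k
    · rw [if_pos hk] at heq
      -- (n'-1)(n'-r)=0 with n'<r forces n'=1
      have hn1 : n' = 1 := by
        rcases lt_trichotomy n' 1 with h | h | h
        · exfalso
          have : n' = 0 := by omega
          rw [this] at heq; nlinarith
        · exact h
        · exfalso; nlinarith [mul_pos (by omega : (0:ℤ) < n' - 1) (by omega : (0:ℤ) < r - n')]
      exfalso
      have hdvd : r ∣ 2 * n := Dvd.intro_left k (by omega)
      have := hcop.isUnit_of_dvd' dvd_rfl hdvd
      rw [Int.isUnit_iff] at this
      omega
    · rw [if_neg hk] at heq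
      -- n'(n'+1-r)=0
      have : n' * (n' + 1 - r) = 0 := by nlinarith
      rcases mul_eq_zero.mp this with h | h
      · left; exact Dvd.intro_left k (by omega)
      · right
        have hn0 : n' = r - 1 := by omega
        have hkodd : Odd k := Int.not_even_iff_odd.mp hk
        obtain ⟨j, hj⟩ := hkodd
        have heq2 : 2 * (n + 1) = (k + 1) * r := by linarith
        have h2 : 2 * (n + 1) = 2 * ((j + 1) * r) := by rw [heq2, hj]; ring
        exact Dvd.intro_left (j + 1) (by omega)
  · intro h
    have hodd' := hC h
    rw [if_neg (Int.not_even_iff_odd.mpr hodd')]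
    rcases h with h | h
    · rw [hA h]; ring
    · rw [hB h]; ring
end

section
/- Let n ≥ 2 and r an odd integer with 1 < r < 2n and gcd(r, 2n) = 1. Write 2n = k*r + n' with 0 < n' < r. Then the equality n'^2 + (if k is even then n' else r - n') = r*n' holds if and only if r divides 2n - 1 or r divides 2n + 1. Moreover, if r divides 2n - 1 then k is odd, and if r divides 2n + 1 then k is even. -/
/-- Arithmetic core of the rigidity classification in type C_n. -/
theorem stmt_8 (n r k n' : ℤ) (hn : 2 ≤ n) (hodd : Odd r) (hr : 1 < r)
    (hlt : r < 2 * n) (hcop : IsCoprime r (2 * n))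
    (hdiv : 2 * n = k * r + n') (h0 : 0 < n') (h1 : n' < r) :
    ((n' ^ 2 + (if Even k then n' else r - n') = r * n') ↔
      (r ∣ 2 * n - 1 ∨ r ∣ 2 * n + 1)) ∧
    (r ∣ 2 * n - 1 → Odd k) ∧ (r ∣ 2 * n + 1 → Even k) := by
  have hne : r ∣ 2 * n - 1 ↔ n' = 1 := by
    constructor
    · intro ⟨c, hc⟩
      have h2 : r ∣ n' - 1 := ⟨c - k, by linear_combination hc - hdiv⟩
      have h3 : n' - 1 = 0 :=
        Int.eq_zero_of_dvd_of_nonneg_of_lt (by omega) (by omega) h2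
      omega
    · intro h
      exact ⟨k, by linear_combination hdiv + (k - 1) * mul_comm k r + h⟩
  have hpe : r ∣ 2 * n + 1 ↔ n' = r - 1 := by
    constructor
    · intro ⟨c, hc⟩
      have h2 : r ∣ r - 1 - n' := ⟨1 - c + k, by linear_combination hdiv - hc⟩
      have h3 : r - 1 - n' = 0 :=
        Int.eq_zero_of_dvd_of_nonneg_of_lt (by omega) (by omega) h2
      omega
    · intro h
      exact ⟨k + 1, by linear_combination hdiv + k * mul_comm k r + h⟩
  have hk1 : r ∣ 2 * n - 1 → Odd k := by
    intro h
    have hn1 : n' = 1 := hne.mp h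
    have hkr : k * r = 2 * n - 1 := by omega
    rcases Int.even_or_odd k with he | ho
    · exfalso
      have : Even (k * r) := he.mul_right r
      rw [hkr] at this
      obtain ⟨m, hm⟩ := this
      omega
    · exact ho
  have hk2 : r ∣ 2 * n + 1 → Even k := by
    intro h
    have hn1 : n' = r - 1 := hpe.mp h
    have hkr : k * r = 2 * n - r + 1 := by omega
    rcases Int.even_or_odd k with he | ho
    · exact he
    · exfalso
      have : Odd (k * r) := ho.mul hodd
      rw [hkr] at this
      obtain ⟨m, hm⟩ := this
      obtain ⟨s, hs⟩ := hodd
      omega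
  refine ⟨?_, hk1, hk2⟩
  by_cases hk : Even k
  · rw [if_pos hk]
    constructor
    · intro h
      have h2 : n' + 1 = r := mul_left_cancel₀ h0.ne' (by linear_combination h)
      exact Or.inr (hpe.mpr (by omega))
    · rintro (h | h)
      · exact absurd (hk1 h) (Int.not_odd_iff_even.mpr hk)
      · have h2 := hpe.mp h
        subst h2
        ring
  · rw [if_neg hk]
    constructor
    · intro h
      have h2 : (n' - 1) * (n' - r) = 0 := by linear_combination h
      rcases mul_eq_zero.mp h2 with h3 | h3
      · exact Or.inl (hne.mpr (by omega))
      · omega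
    · rintro (h | h)
      · have h2 := hne.mp h
        subst h2
        ring
      · exact absurd (hk2 h) hk
end

section
/- Let n ≥ 2, let r be a positive integer with gcd(r,n) = 1 and r < n, write n = k*r + n' with 0 ≤ n' < r, and let J be the n×n nilpotent Jordan block. Then the dimension of the conjugacy orbit of J^r under GL_n(ℂ) (acting by conjugation on nilpotent matrices, computed inside sl_n, i.e. n^2 - 1 minus the dimension of the centralizer in sl_n) equals n^2 - k*r^2 - n'^2. -/
def jordanBlock (n : ℕ) : Matrix (Fin n) (Fin n) ℂ :=
  Matrix.of fun i j => if (i : ℕ) = (j : ℕ) + 1 then 1 else 0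

namespace JB

variable {p q : ℕ}

lemma jb_mul_apply (X : Matrix (Fin p) (Fin q) ℂ) (i : Fin p) (j : Fin q) :
    (jordanBlock p * X) i j = if h : 1 ≤ (i : ℕ) then X ⟨(i : ℕ) - 1, by omega⟩ j else 0 := by
  rw [Matrix.mul_apply]
  split
  · rename_i h
    rw [Finset.sum_eq_single (⟨(i : ℕ) - 1, by omega⟩ : Fin p)]
    · simp [jordanBlock]; omega
    · intro b _ hb
      simp only [jordanBlock, Matrix.of_apply]
      rw [if_neg, zero_mul]
      intro hc
      apply hb
      apply Fin.ext
      simp; omega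
    · simp
  · rename_i h
    apply Finset.sum_eq_zero
    intro b _
    simp only [jordanBlock, Matrix.of_apply]
    rw [if_neg, zero_mul]
    omega

lemma mul_jb_apply (X : Matrix (Fin p) (Fin q) ℂ) (i : Fin p) (j : Fin q) :
    (X * jordanBlock q) i j = if h : (j : ℕ) + 1 < q then X i ⟨(j : ℕ) + 1, h⟩ else 0 := by
  rw [Matrix.mul_apply]
  split
  · rename_i h
    rw [Finset.sum_eq_single (⟨(j : ℕ) + 1, h⟩ : Fin q)]
    · simp [jordanBlock]
    · intro b _ hb
      simp only [jordanBlock, Matrix.of_apply]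
      rw [if_neg, mul_zero]
      intro hc
      apply hb
      apply Fin.ext
      simpa using hc
    · simp
  · rename_i h
    apply Finset.sum_eq_zero
    intro b _
    simp only [jordanBlock, Matrix.of_apply]
    rw [if_neg, mul_zero]
    omega

/-- The rectangular intertwiner. -/
noncomputable def adLR (p q : ℕ) : Matrix (Fin p) (Fin q) ℂ →ₗ[ℂ] Matrix (Fin p) (Fin q) ℂ where
  toFun X := jordanBlock p * X - X * jordanBlock q
  map_add' X Y := by
    simp [Matrix.mul_add, Matrix.add_mul]; abel
  map_smul' c X := by
    simp [Matrix.mul_smul, Matrix.smul_mul, smul_sub]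

lemma mem_ker_adLR {X : Matrix (Fin p) (Fin q) ℂ} :
    X ∈ LinearMap.ker (adLR p q) ↔ jordanBlock p * X = X * jordanBlock q := by
  simp only [LinearMap.mem_ker, adLR, LinearMap.coe_mk, AddHom.coe_mk, sub_eq_zero]

section ker

variable {X : Matrix (Fin p) (Fin q) ℂ}

lemma ker_rel (hX : jordanBlock p * X = X * jordanBlock q) (i : Fin p) (j : Fin q) :
    (if h : 1 ≤ (i : ℕ) then X ⟨(i : ℕ) - 1, by omega⟩ j else 0)
      = if h : (j : ℕ) + 1 < q then X i ⟨(j : ℕ) + 1, h⟩ else 0 := by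
  rw [← jb_mul_apply, ← mul_jb_apply, hX]

lemma ker_step (hX : jordanBlock p * X = X * jordanBlock q) (i : ℕ) (j : ℕ)
    (hi : i + 1 < p) (hj : j + 1 < q) :
    X ⟨i, by omega⟩ ⟨j, by omega⟩ = X ⟨i + 1, hi⟩ ⟨j + 1, hj⟩ := by
  have := ker_rel hX ⟨i + 1, hi⟩ ⟨j, by omega⟩
  simp only at this
  rw [dif_pos (by simp), dif_pos (by simpa using hj)] at this
  simpa using this

lemma ker_prop (hX : jordanBlock p * X = X * jordanBlock q) (a : ℕ) (i j : ℕ)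
    (hi : i + a < p) (hj : j + a < q) :
    X ⟨i, by omega⟩ ⟨j, by omega⟩ = X ⟨i + a, hi⟩ ⟨j + a, hj⟩ := by
  induction a with
  | zero => rfl
  | succ a ih =>
    rw [ih (by omega) (by omega)]
    have := ker_step hX (i + a) (j + a) (by omega) (by omega)
    convert this using 3 <;> omega

lemma ker_row0 (hX : jordanBlock p * X = X * jordanBlock q) (hp : 0 < p) (j : ℕ)
    (hj1 : 1 ≤ j) (hj : j < q) : X ⟨0, hp⟩ ⟨j, hj⟩ = 0 := by
  have := ker_rel hX ⟨0, hp⟩ ⟨j - 1, by omega⟩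
  rw [dif_neg (by simp), dif_pos (by simp; omega)] at this
  refine Eq.trans ?_ this.symm
  congr 1
  apply Fin.ext; simp; omega

lemma ker_colq (hX : jordanBlock p * X = X * jordanBlock q) (hq : 0 < q) (i : ℕ)
    (hi : i + 1 < p) : X ⟨i, by omega⟩ ⟨q - 1, by omega⟩ = 0 := by
  have := ker_rel hX ⟨i + 1, hi⟩ ⟨q - 1, by omega⟩
  rw [dif_pos (by simp), dif_neg (by simp; omega)] at this
  refine Eq.trans ?_ this
  congr 1

/-- The value of a kernel element at any entry. -/
lemma ker_value (hX : jordanBlock p * X = X * jordanBlock q) (hp : 0 < p) (hq : 0 < q)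
    (i : Fin p) (j : Fin q) :
    X i j = if h : (j : ℕ) ≤ (i : ℕ) ∧ p - min p q ≤ (i : ℕ) - j
      then X ⟨(i : ℕ) - j, by omega⟩ ⟨0, hq⟩ else 0 := by
  by_cases hij : (j : ℕ) ≤ (i : ℕ)
  · have key : X ⟨(i : ℕ) - j, by omega⟩ ⟨0, hq⟩ = X i j := by
      have := ker_prop hX j ((i : ℕ) - j) 0 (by omega) (by omega)
      rw [this]; congr 1 <;> [apply Fin.ext; apply Fin.ext] <;> simp <;> omega
    by_cases hD : p - min p q ≤ (i : ℕ) - j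
    · rw [dif_pos ⟨hij, hD⟩, key]
    · rw [dif_neg (by tauto)]
      -- here i - j < p - min p q, forces q < p and i - j < p - q
      have hlt : (i : ℕ) - j + q < p := by omega
      have := ker_prop hX (q - 1 - j) i j (by omega) (by omega)
      rw [this]
      have := ker_colq hX hq ((i : ℕ) + (q - 1 - j)) (by omega)
      convert this using 3
      omega
  · rw [dif_neg (by tauto)]
    have := ker_prop hX i 0 ((j : ℕ) - i) (by omega) (by omega)
    have h0 := ker_row0 hX hp ((j : ℕ) - i) (by omega) (by omega)
    rw [h0] at this
    refine Eq.trans ?_ this.symm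
    congr 1 <;> apply Fin.ext <;> simp <;> omega

end ker

/-- Basis matrices for the kernel. -/
def bm (p q : ℕ) (c : Fin (min p q)) : Matrix (Fin p) (Fin q) ℂ :=
  Matrix.of fun i j => if (i : ℕ) = (j : ℕ) + (p - min p q) + c then 1 else 0

lemma bm_mem (c : Fin (min p q)) : jordanBlock p * bm p q c = bm p q c * jordanBlock q := by
  have hc := c.isLt
  ext i j
  have hi := i.isLt
  have hj := j.isLt
  rw [jb_mul_apply, mul_jb_apply]
  simp only [bm, Matrix.of_apply]
  split_ifs <;> first | rfl | (exfalso; omega)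

lemma bm_indep (hp : 0 < p) (hq : 0 < q) : LinearIndependent ℂ (bm p q) := by
  rw [Fintype.linearIndependent_iff]
  intro g hg c
  have hc := c.isLt
  have h2 : ∑ x : Fin (min p q), g x • (bm p q x ⟨p - min p q + c, by omega⟩ ⟨0, hq⟩) = 0 := by
    have := congrFun (congrFun hg ⟨p - min p q + c, by omega⟩) ⟨0, hq⟩
    simpa [Matrix.sum_apply] using this
  rw [Finset.sum_eq_single c] at h2
  · rw [show bm p q c ⟨p - min p q + c, by omega⟩ ⟨0, hq⟩ = 1 from by
      simp only [bm, Matrix.of_apply]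
      rw [if_pos (show (p - min p q + (c : ℕ)) = 0 + (p - min p q) + (c : ℕ) by omega)]] at h2
    simpa using h2
  · intro b _ hb
    rw [show bm p q b ⟨p - min p q + c, by omega⟩ ⟨0, hq⟩ = 0 from by
      simp only [bm, Matrix.of_apply]
      rw [if_neg]
      intro hcon
      exact hb (Fin.ext (by omega)), smul_zero]
  · simp

lemma ker_span {X : Matrix (Fin p) (Fin q) ℂ} (hX : jordanBlock p * X = X * jordanBlock q)
    (hp : 0 < p) (hq : 0 < q) :
    X = ∑ c : Fin (min p q),
      X ⟨p - min p q + c, by have := c.isLt; omega⟩ ⟨0, hq⟩ • bm p q c := by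
  ext i j
  have hi := i.isLt
  have hj := j.isLt
  simp only [Matrix.sum_apply, Matrix.smul_apply]
  by_cases hcond : (j : ℕ) ≤ (i : ℕ) ∧ p - min p q ≤ (i : ℕ) - j
  · have hlt : (i : ℕ) - j - (p - min p q) < min p q := by omega
    rw [Finset.sum_eq_single ⟨(i : ℕ) - j - (p - min p q), hlt⟩]
    · have hv := ker_value hX hp hq i j
      rw [dif_pos hcond] at hv
      rw [hv]
      simp only [bm, Matrix.of_apply]
      rw [if_pos (show (i : ℕ) = (j : ℕ) + (p - min p q) + ((i : ℕ) - j - (p - min p q))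
        by omega)]
      rw [smul_eq_mul, mul_one]
      congr 1
      apply Fin.ext
      show (i : ℕ) - j = p - min p q + ((i : ℕ) - j - (p - min p q))
      omega
    · intro b _ hb
      simp only [bm, Matrix.of_apply]
      rw [if_neg (show ¬ ((i : ℕ) = (j : ℕ) + (p - min p q) + (b : ℕ)) from
        fun hcon => hb (Fin.ext (show (b : ℕ) = (i : ℕ) - j - (p - min p q) by omega))),
        smul_zero]
    · simp
  · have hv := ker_value hX hp hq i j
    rw [dif_neg hcond] at hv
    rw [hv]
    refine (Finset.sum_eq_zero ?_).symm
    intro b _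
    have hb := b.isLt
    simp only [bm, Matrix.of_apply]
    rw [if_neg (show ¬ ((i : ℕ) = (j : ℕ) + (p - min p q) + (b : ℕ)) from
      fun hcon => hcond ⟨by omega, by omega⟩), smul_zero]

noncomputable def kerBasis (hp : 0 < p) (hq : 0 < q) :
    Module.Basis (Fin (min p q)) ℂ ↥(LinearMap.ker (adLR p q)) := by
  refine Module.Basis.mk (v := fun c => ⟨bm p q c, mem_ker_adLR.mpr (bm_mem c)⟩) ?_ ?_
  · apply LinearIndependent.of_comp (LinearMap.ker (adLR p q)).subtype
    exact bm_indep hp hq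
  · rintro ⟨X, hXmem⟩ -
    have hX := mem_ker_adLR.mp hXmem
    have hspan := ker_span hX hp hq
    have : (⟨X, hXmem⟩ : ↥(LinearMap.ker (adLR p q))) = ∑ c : Fin (min p q),
        X ⟨p - min p q + c, by have := c.isLt; omega⟩ ⟨0, hq⟩ •
          (⟨bm p q c, mem_ker_adLR.mpr (bm_mem c)⟩ : ↥(LinearMap.ker (adLR p q))) := by
      apply Subtype.ext
      push_cast
      exact hspan
    rw [this]
    apply Submodule.sum_mem
    intro c _
    apply Submodule.smul_mem
    exact Submodule.subset_span ⟨c, rfl⟩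

lemma finrank_ker_adLR (hp : 0 < p) (hq : 0 < q) :
    Module.finrank ℂ ↥(LinearMap.ker (adLR p q)) = min p q := by
  rw [Module.finrank_eq_card_basis (kerBasis hp hq), Fintype.card_fin]

end JB

namespace JB

lemma jb_pow (N m : ℕ) : (jordanBlock N) ^ m
    = Matrix.of fun (i j : Fin N) => if (i : ℕ) = (j : ℕ) + m then (1 : ℂ) else 0 := by
  induction m with
  | zero =>
    ext i j
    simp only [pow_zero, Matrix.one_apply, Matrix.of_apply, Nat.add_zero]
    simp [Fin.ext_iff]
  | succ m ih =>
    ext i j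
    rw [pow_succ, ih, Matrix.mul_apply]
    simp only [Matrix.of_apply, jordanBlock]
    have hi := i.isLt
    have hj := j.isLt
    by_cases h : (j : ℕ) + 1 < N
    · rw [Finset.sum_eq_single ⟨(j : ℕ) + 1, h⟩]
      · simp only [Fin.val_mk, if_true]
        rw [mul_one]
        exact if_congr (by omega) rfl rfl
      · intro b _ hb
        have hbv : ¬((b : ℕ) = (j : ℕ) + 1) := fun hc => hb (Fin.ext (by simp only [Fin.val_mk]; omega))
        rw [if_neg hbv, mul_zero]
      · simp
    · refine (Finset.sum_eq_zero ?_).trans ?_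
      · intro b _
        have hb := b.isLt
        rw [if_neg (show ¬ ((b : ℕ) = (j : ℕ) + 1) by omega), mul_zero]
      · rw [if_neg (by omega)]

variable {n r : ℕ}

lemma Nmul_apply (X : Matrix (Fin n) (Fin n) ℂ) (i j : Fin n) :
    ((jordanBlock n ^ r) * X) i j
      = if h : r ≤ (i : ℕ) then X ⟨(i : ℕ) - r, by have := i.isLt; omega⟩ j else 0 := by
  rw [jb_pow, Matrix.mul_apply]
  have hi := i.isLt
  split
  · rename_i h
    rw [Finset.sum_eq_single (⟨(i : ℕ) - r, by omega⟩ : Fin n)]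
    · rw [Matrix.of_apply, if_pos (show (i : ℕ) = (i : ℕ) - r + r by omega), one_mul]
    · intro b _ hb
      rw [Matrix.of_apply,
        if_neg (fun hc => hb (Fin.ext (show (b : ℕ) = (i : ℕ) - r by omega))), zero_mul]
    · simp
  · rename_i h
    apply Finset.sum_eq_zero
    intro b _
    rw [Matrix.of_apply, if_neg (by omega), zero_mul]

lemma mulN_apply (X : Matrix (Fin n) (Fin n) ℂ) (i j : Fin n) :
    (X * (jordanBlock n ^ r)) i j
      = if h : (j : ℕ) + r < n then X i ⟨(j : ℕ) + r, h⟩ else 0 := by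
  rw [jb_pow, Matrix.mul_apply]
  split
  · rename_i h
    rw [Finset.sum_eq_single (⟨(j : ℕ) + r, h⟩ : Fin n)]
    · rw [Matrix.of_apply, if_pos rfl, mul_one]
    · intro b _ hb
      have hbv : ¬((b : ℕ) = (j : ℕ) + r) := fun hc => hb (Fin.ext (by simp only [Fin.val_mk]; omega))
      rw [Matrix.of_apply, if_neg hbv, mul_zero]
    · simp
  · rename_i h
    apply Finset.sum_eq_zero
    intro b _
    have hb := b.isLt
    rw [Matrix.of_apply, if_neg (by omega), mul_zero]

end JB

namespace JB

variable {k n' : ℕ}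

def mfun (k n' : ℕ) {r : ℕ} (a : Fin r) : ℕ := if (a : ℕ) < n' then k + 1 else k

lemma enc_lt_iff (hr : 0 < r) (h1 : n' < r) (hdiv : n = k * r + n') (b : Fin r) (s : ℕ) :
    (b : ℕ) + r * s < n ↔ s < mfun k n' b := by
  have hb := b.isLt
  have hd : n = r * k + n' := by rw [hdiv]; ring
  unfold mfun
  split_ifs with hbn
  · constructor
    · intro h
      by_contra hs
      push_neg at hs
      have h2 : r * (k + 1) ≤ r * s := Nat.mul_le_mul le_rfl hs
      have h3 : r * (k + 1) = r * k + r := by ring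
      omega
    · intro hs
      have h2 : r * s ≤ r * k := Nat.mul_le_mul le_rfl (by omega)
      omega
  · constructor
    · intro h
      by_contra hs
      push_neg at hs
      have h2 : r * k ≤ r * s := Nat.mul_le_mul le_rfl hs
      omega
    · intro hs
      have h2 : r * (s + 1) ≤ r * k := Nat.mul_le_mul le_rfl (by omega)
      have h3 : r * (s + 1) = r * s + r := by ring
      omega

def enc (hr : 0 < r) (h1 : n' < r) (hdiv : n = k * r + n') (a : Fin r)
    (s : Fin (mfun k n' a)) : Fin n :=
  ⟨(a : ℕ) + r * (s : ℕ), (enc_lt_iff hr h1 hdiv a s).mpr s.isLt⟩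

lemma f_congr (f : Π p : Fin r × Fin r, Matrix (Fin (mfun k n' p.1)) (Fin (mfun k n' p.2)) ℂ)
    {a a' b b' : Fin r} (ha : a = a') (hb : b = b')
    {s : Fin (mfun k n' a)} {s' : Fin (mfun k n' a')} (hs : (s : ℕ) = (s' : ℕ))
    {t : Fin (mfun k n' b)} {t' : Fin (mfun k n' b')} (ht : (t : ℕ) = (t' : ℕ)) :
    f (a, b) s t = f (a', b') s' t' := by
  subst ha
  subst hb
  obtain rfl : s = s' := Fin.ext hs
  obtain rfl : t = t' := Fin.ext ht
  rfl

/-- The full-space decomposition. -/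
noncomputable def phi (hr : 0 < r) (h1 : n' < r) (hdiv : n = k * r + n') :
    Matrix (Fin n) (Fin n) ℂ ≃ₗ[ℂ]
      Π p : Fin r × Fin r, Matrix (Fin (mfun k n' p.1)) (Fin (mfun k n' p.2)) ℂ where
  toFun X p := Matrix.of fun s t => X (enc hr h1 hdiv p.1 s) (enc hr h1 hdiv p.2 t)
  invFun f := Matrix.of fun i j =>
    f (⟨(i : ℕ) % r, Nat.mod_lt _ hr⟩, ⟨(j : ℕ) % r, Nat.mod_lt _ hr⟩)
      ⟨(i : ℕ) / r, (enc_lt_iff hr h1 hdiv _ _).mp (by rw [Nat.mod_add_div]; exact i.isLt)⟩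
      ⟨(j : ℕ) / r, (enc_lt_iff hr h1 hdiv _ _).mp (by rw [Nat.mod_add_div]; exact j.isLt)⟩
  map_add' X Y := rfl
  map_smul' c X := rfl
  left_inv X := by
    ext i j
    simp only [Matrix.of_apply]
    congr 1 <;> apply Fin.ext <;> exact Nat.mod_add_div _ _
  right_inv f := by
    funext p
    ext s t
    simp only [Matrix.of_apply]
    obtain ⟨a, b⟩ := p
    apply f_congr
    · apply Fin.ext
      simp only [Fin.val_mk, enc]
      rw [Nat.add_mul_mod_self_left, Nat.mod_eq_of_lt a.isLt]
    · apply Fin.ext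
      simp only [Fin.val_mk, enc]
      rw [Nat.add_mul_mod_self_left, Nat.mod_eq_of_lt b.isLt]
    · simp only [Fin.val_mk, enc]
      rw [Nat.add_mul_div_left _ _ hr, Nat.div_eq_of_lt a.isLt, Nat.zero_add]
    · simp only [Fin.val_mk, enc]
      rw [Nat.add_mul_div_left _ _ hr, Nat.div_eq_of_lt b.isLt, Nat.zero_add]

end JB

namespace JB

variable {n r k n' : ℕ}

lemma left_entry (hr : 0 < r) (h1 : n' < r) (hdiv : n = k * r + n')
    (X : Matrix (Fin n) (Fin n) ℂ) (a b : Fin r)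
    (s : Fin (mfun k n' a)) (t : Fin (mfun k n' b)) :
    ((jordanBlock n ^ r) * X) (enc hr h1 hdiv a s) (enc hr h1 hdiv b t)
      = (jordanBlock (mfun k n' a) * (phi hr h1 hdiv X (a, b))) s t := by
  rw [Nmul_apply, jb_mul_apply]
  have ha := a.isLt
  by_cases hs : 1 ≤ (s : ℕ)
  · have hmul : r * (s : ℕ) = r * ((s : ℕ) - 1) + r := by
      conv_lhs => rw [show (s : ℕ) = ((s : ℕ) - 1) + 1 by omega]
      rw [Nat.mul_add, Nat.mul_one]
    rw [dif_pos (show r ≤ ((enc hr h1 hdiv a s : Fin n) : ℕ) by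
      show r ≤ (a : ℕ) + r * (s : ℕ); omega)]
    rw [dif_pos hs]
    simp only [phi, LinearEquiv.coe_mk, Matrix.of_apply, Equiv.coe_fn_mk]
    congr 1
    apply Fin.ext
    show ((enc hr h1 hdiv a s : Fin n) : ℕ) - r = (a : ℕ) + r * ((s : ℕ) - 1)
    show (a : ℕ) + r * (s : ℕ) - r = (a : ℕ) + r * ((s : ℕ) - 1)
    omega
  · have h0 : (s : ℕ) = 0 := by omega
    have hmul : r * (s : ℕ) = 0 := by rw [h0, Nat.mul_zero]
    rw [dif_neg (show ¬ r ≤ ((enc hr h1 hdiv a s : Fin n) : ℕ) by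
      show ¬ r ≤ (a : ℕ) + r * (s : ℕ); omega)]
    rw [dif_neg hs]

lemma right_entry (hr : 0 < r) (h1 : n' < r) (hdiv : n = k * r + n')
    (X : Matrix (Fin n) (Fin n) ℂ) (a b : Fin r)
    (s : Fin (mfun k n' a)) (t : Fin (mfun k n' b)) :
    (X * (jordanBlock n ^ r)) (enc hr h1 hdiv a s) (enc hr h1 hdiv b t)
      = ((phi hr h1 hdiv X (a, b)) * jordanBlock (mfun k n' b)) s t := by
  rw [mulN_apply, mul_jb_apply]
  have hb := b.isLt
  have hmul : r * ((t : ℕ) + 1) = r * (t : ℕ) + r := by ring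
  by_cases ht : (t : ℕ) + 1 < mfun k n' b
  · have hlt : ((enc hr h1 hdiv b t : Fin n) : ℕ) + r < n := by
      show (b : ℕ) + r * (t : ℕ) + r < n
      have := (enc_lt_iff hr h1 hdiv b ((t : ℕ) + 1)).mpr ht
      omega
    rw [dif_pos hlt, dif_pos ht]
    simp only [phi, LinearEquiv.coe_mk, Matrix.of_apply, Equiv.coe_fn_mk]
    congr 1
    apply Fin.ext
    show ((enc hr h1 hdiv b t : Fin n) : ℕ) + r = (b : ℕ) + r * ((t : ℕ) + 1)
    show (b : ℕ) + r * (t : ℕ) + r = (b : ℕ) + r * ((t : ℕ) + 1)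
    omega
  · have hge : ¬ ((enc hr h1 hdiv b t : Fin n) : ℕ) + r < n := by
      show ¬ (b : ℕ) + r * (t : ℕ) + r < n
      intro hcon
      exact ht ((enc_lt_iff hr h1 hdiv b ((t : ℕ) + 1)).mp (by omega))
    rw [dif_neg hge, dif_neg ht]

lemma commute_iff (hr : 0 < r) (h1 : n' < r) (hdiv : n = k * r + n')
    (X : Matrix (Fin n) (Fin n) ℂ) :
    (jordanBlock n ^ r) * X = X * (jordanBlock n ^ r) ↔
      ∀ p : Fin r × Fin r, phi hr h1 hdiv X p ∈ LinearMap.ker (adLR (mfun k n' p.1) (mfun k n' p.2)) := by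
  constructor
  · intro h p
    rw [mem_ker_adLR]
    obtain ⟨a, b⟩ := p
    ext s t
    rw [← left_entry hr h1 hdiv X a b s t, ← right_entry hr h1 hdiv X a b s t, h]
  · intro h
    ext i j
    have hi : i = enc hr h1 hdiv ⟨(i : ℕ) % r, Nat.mod_lt _ hr⟩
        ⟨(i : ℕ) / r, (enc_lt_iff hr h1 hdiv _ _).mp (by rw [Nat.mod_add_div]; exact i.isLt)⟩ := by
      apply Fin.ext
      exact (Nat.mod_add_div _ _).symm
    have hj : j = enc hr h1 hdiv ⟨(j : ℕ) % r, Nat.mod_lt _ hr⟩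
        ⟨(j : ℕ) / r, (enc_lt_iff hr h1 hdiv _ _).mp (by rw [Nat.mod_add_div]; exact j.isLt)⟩ := by
      apply Fin.ext
      exact (Nat.mod_add_div _ _).symm
    rw [hi, hj, left_entry, right_entry]
    rw [mem_ker_adLR.mp (h (⟨(i : ℕ) % r, Nat.mod_lt _ hr⟩, ⟨(j : ℕ) % r, Nat.mod_lt _ hr⟩))]

end JB

namespace JB

lemma mem_bigker {n r : ℕ} {X : Matrix (Fin n) (Fin n) ℂ} :
    X ∈ LinearMap.ker (LinearMap.mulLeft ℂ (jordanBlock n ^ r)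
        - LinearMap.mulRight ℂ (jordanBlock n ^ r))
      ↔ (jordanBlock n ^ r) * X = X * (jordanBlock n ^ r) := by
  simp only [LinearMap.mem_ker, LinearMap.sub_apply, LinearMap.mulLeft_apply,
    LinearMap.mulRight_apply, sub_eq_zero]

noncomputable def kerEquiv (hr : 0 < r) (h1 : n' < r) (hdiv : n = k * r + n') :
    ↥(LinearMap.ker (LinearMap.mulLeft ℂ (jordanBlock n ^ r)
        - LinearMap.mulRight ℂ (jordanBlock n ^ r)))
      ≃ₗ[ℂ] Π p : Fin r × Fin r, ↥(LinearMap.ker (adLR (mfun k n' p.1) (mfun k n' p.2))) where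
  toFun x p := ⟨phi hr h1 hdiv x.1 p, (commute_iff hr h1 hdiv x.1).mp (mem_bigker.mp x.2) p⟩
  invFun f := ⟨(phi hr h1 hdiv).symm (fun p => (f p).1),
    mem_bigker.mpr ((commute_iff hr h1 hdiv _).mpr (by
      intro p
      rw [LinearEquiv.apply_symm_apply]
      exact (f p).2))⟩
  map_add' x y := by
    funext p
    apply Subtype.ext
    show phi hr h1 hdiv (x.1 + y.1) p = _
    rw [map_add]
    rfl
  map_smul' c x := by
    funext p
    apply Subtype.ext
    show phi hr h1 hdiv (c • x.1) p = _
    rw [map_smul]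
    rfl
  left_inv x := by
    apply Subtype.ext
    show (phi hr h1 hdiv).symm (fun p => phi hr h1 hdiv x.1 p) = x.1
    exact (phi hr h1 hdiv).symm_apply_apply x.1
  right_inv f := by
    funext p
    apply Subtype.ext
    show phi hr h1 hdiv ((phi hr h1 hdiv).symm _) p = _
    rw [LinearEquiv.apply_symm_apply]

lemma count_lt (h1 : n' < r) : (∑ b : Fin r, if (b : ℕ) < n' then (1 : ℕ) else 0) = n' := by
  rw [Fin.sum_univ_eq_sum_range (fun i => if i < n' then (1 : ℕ) else 0) r]
  rw [← Finset.card_filter]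
  rw [show (Finset.range r).filter (fun i => i < n') = Finset.range n' from by
    ext x; simp; omega]
  exact Finset.card_range n'

theorem finrank_bigker (hr : 0 < r) (h1 : n' < r) (hdiv : n = k * r + n') (hk : 1 ≤ k) :
    Module.finrank ℂ
      ↥(LinearMap.ker (LinearMap.mulLeft ℂ (jordanBlock n ^ r)
        - LinearMap.mulRight ℂ (jordanBlock n ^ r))) = k * r ^ 2 + n' ^ 2 := by
  rw [LinearEquiv.finrank_eq (kerEquiv hr h1 hdiv), Module.finrank_pi_fintype]
  have hpos : ∀ a : Fin r, 0 < mfun k n' a := by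
    intro a; unfold mfun; split_ifs <;> omega
  have hval : ∀ p : Fin r × Fin r,
      Module.finrank ℂ ↥(LinearMap.ker (adLR (mfun k n' p.1) (mfun k n' p.2)))
        = k + (if (p.1 : ℕ) < n' ∧ (p.2 : ℕ) < n' then 1 else 0) := by
    intro p
    rw [finrank_ker_adLR (hpos p.1) (hpos p.2)]
    unfold mfun
    split_ifs <;> omega
  rw [Finset.sum_congr rfl (fun p _ => hval p), Finset.sum_add_distrib]
  have hsum : (∑ p : Fin r × Fin r, if (p.1 : ℕ) < n' ∧ (p.2 : ℕ) < n' then (1 : ℕ) else 0)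
      = n' * n' := by
    rw [Fintype.sum_prod_type]
    calc (∑ a : Fin r, ∑ b : Fin r, if (a : ℕ) < n' ∧ (b : ℕ) < n' then (1 : ℕ) else 0)
        = ∑ a : Fin r, (if (a : ℕ) < n' then n' else 0) := by
          apply Finset.sum_congr rfl
          intro a _
          by_cases ha : (a : ℕ) < n'
          · rw [if_pos ha,
              Finset.sum_congr rfl (fun (b : Fin r) _ => show _ = if (b : ℕ) < n' then (1 : ℕ) else 0 from by simp [ha]),
              count_lt h1]
          · simp [ha]
      _ = ∑ a : Fin r, n' * (if (a : ℕ) < n' then (1 : ℕ) else 0) := by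
          apply Finset.sum_congr rfl
          intro a _
          split_ifs <;> simp
      _ = n' * n' := by rw [← Finset.mul_sum, count_lt h1]
  rw [hsum, Finset.sum_const, Finset.card_univ]
  simp only [Fintype.card_prod, Fintype.card_fin, smul_eq_mul]
  ring

end JB

set_option maxHeartbeats 1000000 in
set_option synthInstance.maxHeartbeats 200000 in
/-- Orbit dimension of N_r = J^r in type A: (n² - 1) minus the dimension of the
centralizer of J^r in sl_n equals n² - k*r² - n'², where n = k*r + n'. -/
theorem stmt_11 (n r k n' : ℕ) (hn : 2 ≤ n) (hcop : Nat.gcd r n = 1)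
    (hr : 0 < r) (hrn : r < n) (hdiv : n = k * r + n') (h1 : n' < r) :
    n ^ 2 - 1 -
        Module.finrank ℂ
          ↥((LinearMap.ker
              (LinearMap.mulLeft ℂ (jordanBlock n ^ r) -
                LinearMap.mulRight ℂ (jordanBlock n ^ r))) ⊓
            (LinearMap.ker (Matrix.traceLinearMap (Fin n) ℂ ℂ))) =
      n ^ 2 - k * r ^ 2 - n' ^ 2 := by
  have hk : 1 ≤ k := by
    rcases Nat.eq_zero_or_pos k with h | h
    · subst h; omega
    · exact h
  set K := LinearMap.ker (LinearMap.mulLeft ℂ (jordanBlock n ^ r)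
    - LinearMap.mulRight ℂ (jordanBlock n ^ r)) with hKdef
  have hKdim : Module.finrank ℂ ↥K = k * r ^ 2 + n' ^ 2 := JB.finrank_bigker hr h1 hdiv hk
  set f := Matrix.traceLinearMap (Fin n) ℂ ℂ with hfdef
  have h1mem : (1 : Matrix (Fin n) (Fin n) ℂ) ∈ K :=
    JB.mem_bigker.mpr (by rw [mul_one, one_mul])
  have hn0 : (n : ℂ) ≠ 0 := Nat.cast_ne_zero.mpr (by omega)
  have htr1 : f (1 : Matrix (Fin n) (Fin n) ℂ) = (n : ℂ) := by
    simp [hfdef, Matrix.trace_one]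
  have hrange : LinearMap.range (f.domRestrict K) = ⊤ := by
    rw [eq_top_iff]
    rintro c -
    refine ⟨(c / n) • ⟨1, h1mem⟩, ?_⟩
    rw [map_smul]
    rw [LinearMap.domRestrict_apply]
    simp only [htr1, smul_eq_mul]
    exact div_mul_cancel₀ c hn0
  have hrk := LinearMap.finrank_range_add_finrank_ker (f.domRestrict K)
  rw [hrange, finrank_top, Module.finrank_self] at hrk
  have hker_eq : LinearMap.ker (f.domRestrict K)
      = Submodule.comap K.subtype (K ⊓ LinearMap.ker f) := by
    rw [LinearMap.ker_domRestrict, Submodule.comap_inf, Submodule.comap_subtype_self, top_inf_eq]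
  have hfin2 : Module.finrank ℂ ↥(K ⊓ LinearMap.ker f)
      = Module.finrank ℂ ↥(LinearMap.ker (f.domRestrict K)) := by
    rw [hker_eq]
    exact (LinearEquiv.finrank_eq
      (Submodule.comapSubtypeEquivOfLe (inf_le_left : K ⊓ LinearMap.ker f ≤ K))).symm
  have hdim2 : Module.finrank ℂ ↥(K ⊓ LinearMap.ker f) = k * r ^ 2 + n' ^ 2 - 1 := by
    rw [hfin2]
    omega
  rw [hdim2]
  have hle : k * r ^ 2 + n' ^ 2 ≤ n ^ 2 := by nlinarith [hk, hdiv, sq_nonneg r]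
  have hge : 1 ≤ k * r ^ 2 + n' ^ 2 := by nlinarith [hk, hr]
  set a := n ^ 2
  set b := k * r ^ 2
  set d := n' ^ 2
  omega
end
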